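/- For p > 2 and t > 0, the function f_t is convex on ℝ. -/

import Mathlib

noncomputable def ft (p t s : ℝ) : ℝ :=
  if |s| ≤ t then (p / 2) * t ^ (p - 2) * s ^ 2
  else |s| ^ p + (p / 2 - 1) * t ^ p

open Real Set

lemma ft_even (p t s : ℝ) : ft p t (-s) = ft p t s := by
  simp [ft, abs_neg]

lemma ft_deriv_nonneg (p t : ℝ) (hp : 2 < p) (ht : 0 < t) (s : ℝ) (hs : 0 ≤ s) :
    HasDerivAt (ft p t) (p * (max |s| t) ^ (p - 2) * s) s := by
  have habs : |s| = s := abs_of_nonneg hs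
  have hquad : ∀ x : ℝ, HasDerivAt (fun y => (p / 2) * t ^ (p - 2) * y ^ 2)
      ((p / 2) * t ^ (p - 2) * (2 * x)) x := by
    intro x
    have := (hasDerivAt_pow 2 x).const_mul ((p / 2) * t ^ (p - 2))
    simpa using this
  rcases lt_trichotomy s t with h | h | h
  · -- s < t : quadratic regime
    have hmax : max |s| t = t := max_eq_right (by rw [habs]; exact h.le)
    have hev : (fun y => (p / 2) * t ^ (p - 2) * y ^ 2) =ᶠ[nhds s] ft p t := by
      have : ∀ᶠ x in nhds s, |x| < t := by
        have : ContinuousAt (fun x : ℝ => |x|) s := continuous_abs.continuousAt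
        exact this.eventually_lt continuousAt_const (by rwa [habs])
      filter_upwards [this] with x hx
      simp [ft, hx.le]
    have := (hquad s).congr_of_eventuallyEq hev.symm
    rw [hmax]
    refine this.congr_deriv (Eq.symm ?_)
    ring
  · -- s = t : gluing point
    subst h
    have hmax : max |s| s = s := by rw [habs]; exact max_self s
    have hIic : HasDerivWithinAt (ft p s) (p * s ^ (p - 2) * s) (Set.Iic s) s := by
      have h1 : HasDerivWithinAt (fun y => (p / 2) * s ^ (p - 2) * y ^ 2)
          ((p / 2) * s ^ (p - 2) * (2 * s)) (Set.Iic s) s := (hquad s).hasDerivWithinAt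
      have h2 : HasDerivWithinAt (ft p s) ((p / 2) * s ^ (p - 2) * (2 * s)) (Set.Iic s) s := by
        apply h1.congr_of_eventuallyEq
        · have hpos : ∀ᶠ x in nhdsWithin s (Set.Iic s), 0 < x :=
            eventually_nhdsWithin_of_eventually_nhds
              (eventually_nhds_iff.2 ⟨Set.Ioi 0, fun x hx => hx, isOpen_Ioi, ht⟩)
          filter_upwards [hpos, self_mem_nhdsWithin] with x hx hx'
          have hxs : |x| ≤ s := by rw [abs_of_pos hx]; exact hx'
          simp [ft, hxs]
        · simp [ft, abs_of_pos ht]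
      convert h2 using 1
      ring
    have hIci : HasDerivWithinAt (ft p s) (p * s ^ (p - 2) * s) (Set.Ici s) s := by
      have h1 : HasDerivWithinAt (fun y : ℝ => y ^ p + (p / 2 - 1) * s ^ p)
          (p * s ^ (p - 1)) (Set.Ici s) s :=
        ((Real.hasDerivAt_rpow_const (Or.inl ht.ne')).add_const _).hasDerivWithinAt
      have h2 : HasDerivWithinAt (ft p s) (p * s ^ (p - 1)) (Set.Ici s) s := by
        apply h1.congr
        · intro x hx
          have hx0 : 0 < x := lt_of_lt_of_le ht hx
          rcases (Set.mem_Ici.mp hx).eq_or_lt with rfl | hlt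
          · have hsp : s ^ (p - 2) * s ^ (2 : ℕ) = s ^ p := by
              rw [← Real.rpow_natCast s 2, ← Real.rpow_add ht]; norm_num
            simp only [ft, abs_of_pos ht, le_refl, if_pos]
            rw [mul_assoc, hsp]; ring
          · simp [ft, abs_of_pos hx0, not_le.2 hlt]
        · have hsp : s ^ (p - 2) * s ^ (2 : ℕ) = s ^ p := by
            rw [← Real.rpow_natCast s 2, ← Real.rpow_add ht]; norm_num
          simp only [ft, abs_of_pos ht, le_refl, if_pos]
          rw [mul_assoc, hsp]; ring
      convert h2 using 1
      rw [mul_assoc, ← Real.rpow_add_one ht.ne' (p - 2),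
        show p - 2 + 1 = p - 1 by ring]
    have := hIic.union hIci
    rw [Set.Iic_union_Ici, hasDerivWithinAt_univ] at this
    rwa [habs, max_self]
  · -- t < s : power regime
    have hs0 : 0 < s := ht.trans h
    have hmax : max |s| t = |s| := max_eq_left (by rw [habs]; exact h.le)
    have hev : (fun y : ℝ => y ^ p + (p / 2 - 1) * t ^ p) =ᶠ[nhds s] ft p t := by
      have : ∀ᶠ x in nhds s, t < x :=
        eventually_nhds_iff.2 ⟨Set.Ioi t, fun x hx => hx, isOpen_Ioi, h⟩
      filter_upwards [this] with x hx
      have hx0 : 0 < x := ht.trans hx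
      simp [ft, abs_of_pos hx0, not_le.2 hx]
    have h1 : HasDerivAt (fun y : ℝ => y ^ p + (p / 2 - 1) * t ^ p)
        (p * s ^ (p - 1)) s :=
      (Real.hasDerivAt_rpow_const (Or.inl hs0.ne')).add_const _
    have := h1.congr_of_eventuallyEq hev.symm
    rw [hmax, habs]
    refine this.congr_deriv (Eq.symm ?_)
    rw [mul_assoc, ← Real.rpow_add_one hs0.ne' (p - 2),
      show p - 2 + 1 = p - 1 by ring]
lemma ft_deriv (p t : ℝ) (hp : 2 < p) (ht : 0 < t) (s : ℝ) :
    HasDerivAt (ft p t) (p * (max |s| t) ^ (p - 2) * s) s := by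
  rcases le_total 0 s with hs | hs
  · exact ft_deriv_nonneg p t hp ht s hs
  · have h := ft_deriv_nonneg p t hp ht (-s) (by linarith)
    have h2 := h.comp s (hasDerivAt_neg s)
    have heq : ft p t ∘ Neg.neg = ft p t := funext fun x => ft_even p t x
    rw [heq] at h2
    refine h2.congr_deriv (Eq.symm ?_)
    rw [abs_neg]
    ring

theorem ft_convex (p t : ℝ) (hp : 2 < p) (ht : 0 < t) :
    ConvexOn ℝ Set.univ (fun s => ft p t s) := by
  have hd : ∀ s, HasDerivAt (ft p t) (p * (max |s| t) ^ (p - 2) * s) s := ft_deriv p t hp ht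
  have hder : ∀ s, deriv (ft p t) s = p * (max |s| t) ^ (p - 2) * s := fun s => (hd s).deriv
  have hp0 : 0 < p := by linarith
  have hmono : MonotoneOn (deriv (ft p t)) (interior (univ : Set ℝ)) := by
    intro a _ b _ hab
    rw [hder a, hder b]
    have hma : (0:ℝ) < max |a| t := lt_max_of_lt_right ht
    have hmb : (0:ℝ) < max |b| t := lt_max_of_lt_right ht
    rcases le_total 0 a with ha | ha
    · -- 0 ≤ a ≤ b
      have hmab : max |a| t ≤ max |b| t := by
        refine max_le_max ?_ le_rfl
        rw [abs_of_nonneg ha, abs_of_nonneg (ha.trans hab)]; exact hab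
      have : (max |a| t) ^ (p-2) ≤ (max |b| t) ^ (p-2) :=
        rpow_le_rpow hma.le hmab (by linarith)
      have h1 : p * (max |a| t) ^ (p-2) ≤ p * (max |b| t) ^ (p-2) := by
        exact mul_le_mul_of_nonneg_left this hp0.le
      calc p * (max |a| t) ^ (p-2) * a ≤ p * (max |b| t) ^ (p-2) * a := by
            exact mul_le_mul_of_nonneg_right h1 ha
        _ ≤ p * (max |b| t) ^ (p-2) * b := by
            have : (0:ℝ) ≤ p * (max |b| t) ^ (p-2) :=
              mul_nonneg hp0.le (rpow_nonneg hmb.le _)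
            exact mul_le_mul_of_nonneg_left hab this
    · rcases le_total 0 b with hb | hb
      · -- a ≤ 0 ≤ b
        have h1 : p * (max |a| t) ^ (p-2) * a ≤ 0 :=
          mul_nonpos_of_nonneg_of_nonpos (mul_nonneg hp0.le (rpow_nonneg hma.le _)) ha
        have h2 : (0:ℝ) ≤ p * (max |b| t) ^ (p-2) * b :=
          mul_nonneg (mul_nonneg hp0.le (rpow_nonneg hmb.le _)) hb
        linarith
      · -- a ≤ b ≤ 0
        have hmab : max |b| t ≤ max |a| t := by
          refine max_le_max ?_ le_rfl
          rw [abs_of_nonpos ha, abs_of_nonpos hb]; linarith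
        have : (max |b| t) ^ (p-2) ≤ (max |a| t) ^ (p-2) :=
          rpow_le_rpow hmb.le hmab (by linarith)
        have h1 : p * (max |b| t) ^ (p-2) ≤ p * (max |a| t) ^ (p-2) :=
          mul_le_mul_of_nonneg_left this hp0.le
        calc p * (max |a| t) ^ (p-2) * a ≤ p * (max |a| t) ^ (p-2) * b := by
              exact mul_le_mul_of_nonneg_left hab
                (mul_nonneg hp0.le (rpow_nonneg hma.le _))
          _ ≤ p * (max |b| t) ^ (p-2) * b :=
              mul_le_mul_of_nonpos_right h1 hb
  exact hmono.convexOn_of_deriv convex_univ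
    (fun s _ => (hd s).continuousAt.continuousWithinAt)
    (fun s _ => ((hd s).differentiableAt).differentiableWithinAt)
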